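/- For every σ > 0, M ≥ 1 and ε > 0 there exists δ ∈ (0, σ) with the following property: if φ, y : [0,∞) → [0,∞) are locally bounded functions and γ ≥ 0 is a constant such that φ(t) ≤ M·exp(−σ(t−t₀))·φ(t₀) + γ·sup_{t₀≤s≤t} y(s) for all 0 ≤ t₀ ≤ t, then φ(t) ≤ M·exp(−δt)·φ(0) + γ(1+ε)·sup_{0≤s≤t}( y(s)·exp(−δ(t−s)) ) for all t ≥ 0. -/

import Mathlib

open Real Set

set_option maxHeartbeats 1000000 in
theorem stmt_1 (σ M ε : ℝ) (hσ : 0 < σ) (hM : 1 ≤ M) (hε : 0 < ε) :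
    ∃ δ : ℝ, δ ∈ Set.Ioo 0 σ ∧
      ∀ (φ y : ℝ → ℝ) (γ : ℝ), 0 ≤ γ →
        (∀ t, 0 ≤ φ t) → (∀ t, 0 ≤ y t) →
        (∀ T : ℝ, BddAbove (φ '' Set.Icc 0 T) ∧ BddAbove (y '' Set.Icc 0 T)) →
        (∀ t₀ t : ℝ, 0 ≤ t₀ → t₀ ≤ t →
          φ t ≤ M * Real.exp (-σ * (t - t₀)) * φ t₀ + γ * sSup (y '' Set.Icc t₀ t)) →
        ∀ t : ℝ, 0 ≤ t →
          φ t ≤ M * Real.exp (-δ * t) * φ 0 +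
            γ * (1 + ε) * sSup ((fun s => y s * Real.exp (-δ * (t - s))) '' Set.Icc 0 t) := by
  have hM0 : (0:ℝ) < M := lt_of_lt_of_le one_pos hM
  have hε1 : (0:ℝ) < 1 + ε := by linarith
  set η : ℝ := ε / (2 * (1 + ε)) with hηdef
  have hη0 : 0 < η := by positivity
  have hη1 : η < 1 := by
    rw [hηdef, div_lt_one (by linarith)]; linarith
  have hMη : 1 < M / η := by
    rw [lt_div_iff₀ hη0]; nlinarith
  set T : ℝ := 2 / σ * Real.log (M / η) with hTdef
  have hT0 : 0 < T := mul_pos (by positivity) (Real.log_pos hMη)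
  set δ : ℝ := min (σ / 2) (Real.log (1 + ε / 2) / T) with hδdef
  have hδ0 : 0 < δ := lt_min (by linarith) (div_pos (Real.log_pos (by linarith)) hT0)
  have hδσ2 : δ ≤ σ / 2 := min_le_left _ _
  have hδσ : δ < σ := lt_of_le_of_lt hδσ2 (by linarith)
  have hexpT2 : Real.exp (σ / 2 * T) = M / η := by
    rw [hTdef, show σ / 2 * (2 / σ * Real.log (M / η)) = Real.log (M / η) by
      field_simp]
    exact Real.exp_log (by positivity)
  have hedT : Real.exp (δ * T) ≤ 1 + ε / 2 := by
    have h2 : δ ≤ Real.log (1 + ε / 2) / T := min_le_right _ _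
    have h1 : δ * T ≤ Real.log (1 + ε / 2) := by
      calc δ * T ≤ Real.log (1 + ε / 2) / T * T := by nlinarith
        _ = Real.log (1 + ε / 2) := by field_simp
    calc Real.exp (δ * T) ≤ Real.exp (Real.log (1 + ε / 2)) := Real.exp_le_exp.mpr h1
      _ = 1 + ε / 2 := Real.exp_log (by linarith)
  set ρ : ℝ := M * Real.exp (-(σ - δ) * T) with hρdef
  have hρ0 : 0 < ρ := by positivity
  have hexphalf : Real.exp (-(σ / 2) * T) = η / M := by
    rw [show -(σ/2) * T = -(σ/2*T) by ring, Real.exp_neg, hexpT2]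
    rw [inv_div]
  have hρη : ρ ≤ η := by
    have h1 : Real.exp (-(σ - δ) * T) ≤ Real.exp (-(σ / 2) * T) :=
      Real.exp_le_exp.mpr (by nlinarith)
    rw [hexphalf] at h1
    calc ρ ≤ M * (η / M) := mul_le_mul_of_nonneg_left h1 hM0.le
      _ = η := by field_simp
  have hMeT : M ≤ Real.exp ((σ - δ) * T) := by
    have h1 : Real.exp (σ / 2 * T) ≤ Real.exp ((σ - δ) * T) :=
      Real.exp_le_exp.mpr (by nlinarith)
    have h2 : M ≤ M / η := by
      rw [le_div_iff₀ hη0]; nlinarith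
    calc M ≤ M / η := h2
      _ = Real.exp (σ/2*T) := hexpT2.symm
      _ ≤ _ := h1
  have hkey : ρ * (1 + ε) + Real.exp (δ * T) ≤ 1 + ε := by
    have h1 : ρ * (1 + ε) ≤ η * (1 + ε) := by nlinarith
    have h2 : η * (1 + ε) = ε / 2 := by
      rw [hηdef]; field_simp
    nlinarith
  refine ⟨δ, ⟨hδ0, hδσ⟩, ?_⟩
  intro φ y γ hγ hφ0 hy0 hbdd hineq
  set Y : ℝ → ℝ :=
    fun t => sSup ((fun s => y s * Real.exp (-δ * (t - s))) '' Set.Icc 0 t) with hYdef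
  have hYbdd : ∀ t : ℝ,
      BddAbove ((fun s => y s * Real.exp (-δ * (t - s))) '' Set.Icc 0 t) := by
    intro t
    obtain ⟨B, hB⟩ := (hbdd t).2
    refine ⟨B, ?_⟩
    rintro x ⟨s, hs, rfl⟩
    have h1 : Real.exp (-δ * (t - s)) ≤ 1 := by
      rw [Real.exp_le_one_iff]
      nlinarith [hs.1, hs.2]
    have h2 : y s ≤ B := hB ⟨s, hs, rfl⟩
    calc y s * Real.exp (-δ * (t - s)) ≤ y s * 1 :=
          mul_le_mul_of_nonneg_left h1 (hy0 s)
      _ = y s := mul_one _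
      _ ≤ B := h2
  have hYmem : ∀ t s : ℝ, 0 ≤ s → s ≤ t → y s * Real.exp (-δ * (t - s)) ≤ Y t :=
    fun t s h0 hst => le_csSup (hYbdd t) ⟨s, ⟨h0, hst⟩, rfl⟩
  have hY0 : ∀ t : ℝ, 0 ≤ t → 0 ≤ Y t := fun t ht =>
    le_trans (mul_nonneg (hy0 0) (Real.exp_pos _).le) (hYmem t 0 le_rfl ht)
  have hS : ∀ a b : ℝ, 0 ≤ a → a ≤ b → ∀ t : ℝ, b ≤ t →
      sSup (y '' Set.Icc a b) ≤ Real.exp (δ * (t - a)) * Y t := by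
    intro a b ha hab t hbt
    have hat : a ≤ t := le_trans hab hbt
    have h0t : 0 ≤ t := le_trans ha hat
    have hne : (y '' Set.Icc a b).Nonempty := ⟨y a, a, ⟨le_rfl, hab⟩, rfl⟩
    apply csSup_le hne
    rintro x ⟨s, hs, rfl⟩
    have h1 : y s * Real.exp (-δ * (t - s)) ≤ Y t :=
      hYmem t s (ha.trans hs.1) (hs.2.trans hbt)
    have h2 : Real.exp (δ * (t - s)) ≤ Real.exp (δ * (t - a)) :=
      Real.exp_le_exp.mpr (by nlinarith [hs.1])
    calc y s = y s * Real.exp (-δ * (t - s)) * Real.exp (δ * (t - s)) := by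
          rw [mul_assoc, ← Real.exp_add, show -δ * (t - s) + δ * (t - s) = 0 by ring,
            Real.exp_zero, mul_one]
      _ ≤ Y t * Real.exp (δ * (t - s)) :=
          mul_le_mul_of_nonneg_right h1 (Real.exp_pos _).le
      _ ≤ Y t * Real.exp (δ * (t - a)) :=
          mul_le_mul_of_nonneg_left h2 (hY0 t h0t)
      _ = Real.exp (δ * (t - a)) * Y t := mul_comm _ _
  have hYshift : ∀ t : ℝ, T ≤ t → Y (t - T) ≤ Real.exp (δ * T) * Y t := by
    intro t hTt
    have hne : ((fun s => y s * Real.exp (-δ * (t - T - s))) '' Set.Icc 0 (t - T)).Nonempty :=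
      ⟨y 0 * Real.exp (-δ * (t - T - 0)), 0, ⟨le_rfl, by linarith⟩, rfl⟩
    apply csSup_le hne
    rintro x ⟨s, hs, rfl⟩
    have h1 : y s * Real.exp (-δ * (t - s)) ≤ Y t :=
      hYmem t s hs.1 (by linarith [hs.2])
    calc y s * Real.exp (-δ * (t - T - s))
        = y s * Real.exp (-δ * (t - s)) * Real.exp (δ * T) := by
          rw [mul_assoc, ← Real.exp_add, show -δ * (t - s) + δ * T = -δ * (t - T - s) by ring]
      _ ≤ Y t * Real.exp (δ * T) :=
          mul_le_mul_of_nonneg_right h1 (Real.exp_pos _).le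
      _ = Real.exp (δ * T) * Y t := mul_comm _ _
  have main : ∀ n : ℕ, ∀ t : ℝ, (n : ℝ) * T ≤ t → t ≤ ((n : ℝ) + 1) * T →
      φ t ≤ M ^ (n + 1) * Real.exp (-σ * t) * φ 0 + γ * (1 + ε) * Y t := by
    intro n
    induction n with
    | zero =>
      intro t ht0 ht1
      simp only [Nat.cast_zero, zero_mul] at ht0
      simp only [Nat.cast_zero, zero_add, one_mul] at ht1
      have h1 := hineq 0 t le_rfl ht0
      have h2 : sSup (y '' Set.Icc 0 t) ≤ Real.exp (δ * (t - 0)) * Y t :=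
        hS 0 t le_rfl ht0 t le_rfl
      have h3 : Real.exp (δ * (t - 0)) ≤ 1 + ε := by
        have h4 : Real.exp (δ * (t - 0)) ≤ Real.exp (δ * T) :=
          Real.exp_le_exp.mpr (by nlinarith)
        linarith
      have h5 : γ * sSup (y '' Set.Icc 0 t) ≤ γ * ((1 + ε) * Y t) := by
        apply mul_le_mul_of_nonneg_left _ hγ
        calc sSup (y '' Set.Icc 0 t) ≤ Real.exp (δ * (t - 0)) * Y t := h2
          _ ≤ (1 + ε) * Y t := mul_le_mul_of_nonneg_right h3 (hY0 t ht0)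
      have h6 : φ t ≤ M * Real.exp (-σ * (t - 0)) * φ 0 + γ * ((1 + ε) * Y t) :=
        le_trans h1 (by linarith)
      calc φ t ≤ M * Real.exp (-σ * (t - 0)) * φ 0 + γ * ((1 + ε) * Y t) := h6
        _ = M ^ (0 + 1) * Real.exp (-σ * t) * φ 0 + γ * (1 + ε) * Y t := by
            rw [sub_zero]; ring
    | succ n ih =>
      intro t ht0 ht1
      push_cast at ht0 ht1
      have hn0 : (0:ℝ) ≤ (n : ℝ) := Nat.cast_nonneg n
      have hTt : T ≤ t := by nlinarith
      have h0tT : 0 ≤ t - T := by linarith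
      have hA : (n : ℝ) * T ≤ t - T := by nlinarith
      have hB : t - T ≤ ((n : ℝ) + 1) * T := by nlinarith
      have hrec := hineq (t - T) t h0tT (by linarith)
      have hih := ih (t - T) hA hB
      have hSb : sSup (y '' Set.Icc (t - T) t) ≤ Real.exp (δ * T) * Y t := by
        have h := hS (t - T) t h0tT (by linarith) t le_rfl
        rwa [show t - (t - T) = T by ring] at h
      have hYs := hYshift t hTt
      have hexp1 : Real.exp (-σ * (t - (t - T))) = Real.exp (-σ * T) := by
        rw [show t - (t - T) = T by ring]
      rw [hexp1] at hrec
      have hMe : 0 ≤ M * Real.exp (-σ * T) := by positivity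
      have hρeq : M * Real.exp (-σ * T) * Real.exp (δ * T) = ρ := by
        rw [hρdef, mul_assoc, ← Real.exp_add]
        congr 1
        ring
      have hexp2 : Real.exp (-σ * T) * Real.exp (-σ * (t - T)) = Real.exp (-σ * t) := by
        rw [← Real.exp_add]
        congr 1
        ring
      have step1 : φ t ≤ M * Real.exp (-σ * T) *
          (M ^ (n + 1) * Real.exp (-σ * (t - T)) * φ 0 + γ * (1 + ε) * Y (t - T)) +
          γ * (Real.exp (δ * T) * Y t) := by
        calc φ t ≤ M * Real.exp (-σ * T) * φ (t - T) + γ * sSup (y '' Set.Icc (t - T) t) :=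
              hrec
          _ ≤ _ := by
              apply add_le_add
              · exact mul_le_mul_of_nonneg_left hih hMe
              · exact mul_le_mul_of_nonneg_left hSb hγ
      have step2 : M * Real.exp (-σ * T) * (γ * (1 + ε) * Y (t - T)) ≤
          γ * ((1 + ε) * ρ) * Y t := by
        calc M * Real.exp (-σ * T) * (γ * (1 + ε) * Y (t - T))
            ≤ M * Real.exp (-σ * T) * (γ * (1 + ε) * (Real.exp (δ * T) * Y t)) := by
              apply mul_le_mul_of_nonneg_left _ hMe
              exact mul_le_mul_of_nonneg_left hYs (by positivity)
          _ = (M * Real.exp (-σ * T) * Real.exp (δ * T)) * (γ * (1 + ε)) * Y t := by ring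
          _ = γ * ((1 + ε) * ρ) * Y t := by rw [hρeq]; ring
      have step3 : M * Real.exp (-σ * T) * (M ^ (n + 1) * Real.exp (-σ * (t - T)) * φ 0)
          = M ^ (n + 1 + 1) * Real.exp (-σ * t) * φ 0 := by
        rw [← hexp2]; ring
      have hYt : 0 ≤ Y t := hY0 t (by linarith)
      have step4 : γ * ((1 + ε) * ρ) * Y t + γ * (Real.exp (δ * T) * Y t)
          ≤ γ * (1 + ε) * Y t := by
        have h : γ * (((1 + ε) * ρ + Real.exp (δ * T)) * Y t) ≤ γ * ((1 + ε) * Y t) := by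
          apply mul_le_mul_of_nonneg_left _ hγ
          apply mul_le_mul_of_nonneg_right _ hYt
          linarith
        nlinarith [h]
      calc φ t ≤ M * Real.exp (-σ * T) *
            (M ^ (n + 1) * Real.exp (-σ * (t - T)) * φ 0 + γ * (1 + ε) * Y (t - T)) +
            γ * (Real.exp (δ * T) * Y t) := step1
        _ = M * Real.exp (-σ * T) * (M ^ (n + 1) * Real.exp (-σ * (t - T)) * φ 0) +
            (M * Real.exp (-σ * T) * (γ * (1 + ε) * Y (t - T)) +
              γ * (Real.exp (δ * T) * Y t)) := by ring
        _ ≤ M ^ (n + 1 + 1) * Real.exp (-σ * t) * φ 0 +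
            (γ * ((1 + ε) * ρ) * Y t + γ * (Real.exp (δ * T) * Y t)) := by
            rw [step3]
            exact add_le_add_right (add_le_add_left step2 _) _
        _ ≤ M ^ (n + 1 + 1) * Real.exp (-σ * t) * φ 0 + γ * (1 + ε) * Y t :=
            add_le_add_right step4 _
  intro t ht
  set n := ⌊t / T⌋₊ with hn
  have hn1 : (n : ℝ) * T ≤ t := by
    have h := Nat.floor_le (div_nonneg ht hT0.le)
    calc (n : ℝ) * T ≤ t / T * T := by nlinarith
      _ = t := by field_simp
  have hn2 : t ≤ ((n : ℝ) + 1) * T := by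
    have h := (Nat.lt_floor_add_one (t / T)).le
    calc t = t / T * T := by field_simp
      _ ≤ ((n : ℝ) + 1) * T := by nlinarith
  have hmain := main n t hn1 hn2
  have hpow : M ^ (n + 1) * Real.exp (-σ * t) ≤ M * Real.exp (-δ * t) := by
    have h1 : M ^ n ≤ Real.exp ((σ - δ) * t) := by
      calc M ^ n ≤ (Real.exp ((σ - δ) * T)) ^ n := pow_le_pow_left₀ hM0.le hMeT n
        _ = Real.exp ((σ - δ) * T * n) := by
            rw [← Real.exp_nat_mul]
            congr 1
            ring
        _ ≤ Real.exp ((σ - δ) * t) := by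
            apply Real.exp_le_exp.mpr
            nlinarith [(Nat.cast_nonneg n : (0:ℝ) ≤ (n:ℝ))]
    have h2 : Real.exp ((σ - δ) * t) * Real.exp (-σ * t) = Real.exp (-δ * t) := by
      rw [← Real.exp_add]
      congr 1
      ring
    calc M ^ (n + 1) * Real.exp (-σ * t) = M * (M ^ n * Real.exp (-σ * t)) := by ring
      _ ≤ M * (Real.exp ((σ - δ) * t) * Real.exp (-σ * t)) := by
          apply mul_le_mul_of_nonneg_left _ hM0.le
          exact mul_le_mul_of_nonneg_right h1 (Real.exp_pos _).le
      _ = M * Real.exp (-δ * t) := by rw [h2]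
  calc φ t ≤ M ^ (n + 1) * Real.exp (-σ * t) * φ 0 + γ * (1 + ε) * Y t := hmain
    _ ≤ M * Real.exp (-δ * t) * φ 0 + γ * (1 + ε) * Y t :=
        add_le_add_left (mul_le_mul_of_nonneg_right hpow (hφ0 0)) _
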